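/- Every Kepler ellipse with minor axis B > 0 passing through the point (x₁, 0), x₁ > 0, is tangent to the parabola y² = 4p(x + p) with p = B²/(4x₁). -/

import Mathlib

/-- Every Kepler ellipse with minor axis `B` (i.e. a curve
`a x + b y + c√(x²+y²) = 1` with `c > 0` and `a² + b² − c² = −4/B²`) passing
through `(x₁, 0)` (x₁ > 0) is tangent to the parabola `y² = 4p(x+p)` with
`p = B²/(4x₁)`: the two curves meet at a point where the gradients of their
defining functions are parallel. -/
theorem fixed_minor_axis_envelope_parabola
    (B x₁ a b c : ℝ) (hB : 0 < B) (hx₁ : 0 < x₁) (hc : 0 < c)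
    (hminor : a ^ 2 + b ^ 2 - c ^ 2 = -(4 / B ^ 2))
    (hthrough : a * x₁ + c * Real.sqrt (x₁ ^ 2 + 0 ^ 2) = 1) :
    ∃ q : ℝ × ℝ, q ≠ 0 ∧
      a * q.1 + b * q.2 + c * Real.sqrt (q.1 ^ 2 + q.2 ^ 2) = 1 ∧
      q.2 ^ 2 = 4 * (B ^ 2 / (4 * x₁)) * (q.1 + B ^ 2 / (4 * x₁)) ∧
      ∃ t : ℝ,
        a + c * q.1 / Real.sqrt (q.1 ^ 2 + q.2 ^ 2)
            = t * (-(4 * (B ^ 2 / (4 * x₁)))) ∧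
        b + c * q.2 / Real.sqrt (q.1 ^ 2 + q.2 ^ 2) = t * (2 * q.2) := by
  have hBne : B ≠ 0 := hB.ne'
  have hxne : x₁ ≠ 0 := hx₁.ne'
  -- from the through-condition: a*x₁ + c*x₁ = 1
  have hsq : Real.sqrt (x₁ ^ 2 + 0 ^ 2) = x₁ := by
    rw [show x₁ ^ 2 + 0 ^ 2 = x₁ ^ 2 by ring, Real.sqrt_sq hx₁.le]
  rw [hsq] at hthrough
  set X : ℝ := B ^ 2 / (4 * x₁) * (b ^ 2 * x₁ ^ 2 - 1) with hX
  set Y : ℝ := -(b * B ^ 2) / 2 with hY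
  set R : ℝ := B ^ 2 / (4 * x₁) * (b ^ 2 * x₁ ^ 2 + 1) with hRdef
  have hRpos : 0 < R := by
    have h1 : 0 < B ^ 2 / (4 * x₁) := by positivity
    have h2 : 0 < b ^ 2 * x₁ ^ 2 + 1 := by positivity
    exact mul_pos h1 h2
  have hRne : R ≠ 0 := hRpos.ne'
  have hR : Real.sqrt (X ^ 2 + Y ^ 2) = R := by
    rw [show X ^ 2 + Y ^ 2 = R ^ 2 by rw [hX, hY, hRdef]; field_simp; ring,
      Real.sqrt_sq hRpos.le]
  refine ⟨(X, Y), ?_, ?_, ?_, -(a + c * X / R) * x₁ / B ^ 2, ?_, ?_⟩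
  · intro h
    have hX0 : X = 0 := congrArg Prod.fst h
    have hY0 : Y = 0 := congrArg Prod.snd h
    have hb : b = 0 := by
      have := hY0
      rw [hY] at this
      have : b * B ^ 2 = 0 := by linarith
      rcases mul_eq_zero.mp this with h | h
      · exact h
      · exact absurd h (pow_ne_zero 2 hBne)
    rw [hX, hb] at hX0
    have : B ^ 2 / (4 * x₁) ≠ 0 := by positivity
    simp at hX0
    tauto
  · -- ellipse equation at (X, Y)
    show a * X + b * Y + c * Real.sqrt (X ^ 2 + Y ^ 2) = 1
    rw [hR, hX, hY, hRdef]
    have hm' : (a ^ 2 + b ^ 2 - c ^ 2) * B ^ 2 = -4 := by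
      rw [hminor]; field_simp
    field_simp
    linear_combination (-2 * x₁) * hm' +
      (2 * B ^ 2 * (a - c) + 2 * B ^ 2 * x₁ * b ^ 2) * hthrough
  · -- parabola equation at (X, Y)
    show Y ^ 2 = 4 * (B ^ 2 / (4 * x₁)) * (X + B ^ 2 / (4 * x₁))
    rw [hX, hY]
    field_simp
    ring
  · -- first gradient component
    show a + c * X / Real.sqrt (X ^ 2 + Y ^ 2)
        = -(a + c * X / R) * x₁ / B ^ 2 * (-(4 * (B ^ 2 / (4 * x₁))))
    rw [hR]
    field_simp
  · -- second gradient component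
    show b + c * Y / Real.sqrt (X ^ 2 + Y ^ 2)
        = -(a + c * X / R) * x₁ / B ^ 2 * (2 * Y)
    rw [hR]
    rw [hX, hY, hRdef] at *
    field_simp
    linear_combination (-2 * b * (b ^ 2 * x₁ ^ 2 + 1)) * hthrough
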